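/- Let G = (V,A) be a finite simple graph in which every vertex has degree at least 2, and let n = n(G) = W ⊕ z be its graph algebra over a field k of characteristic zero. Then: (i) (Λ²n)^n = Λ²z; (ii) n is of TST type, i.e. the only antisymmetric linear map S : W* → W with T_α S T_β + T_β S T_α = 0 for all edges α, β is S = 0; and consequently (iii) every Lie bialgebra structure δ on n satisfies δ(z) ⊆ Λ²z and δ(W) ⊆ W∧z ⊕ Λ²z. -/

import Mathlib

open TensorProduct

set_option synthInstance.maxHeartbeats 1000000
set_option maxHeartbeats 1000000

/-- The adjoint action of a Lie algebra `g` on `g ⊗ g`, determined by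
`x · (a ⊗ b) = ⁅x,a⁆ ⊗ b + a ⊗ ⁅x,b⁆`. -/
noncomputable def tAct (k g : Type*) [CommRing k] [LieRing g] [LieAlgebra k g] (x : g) :
    g ⊗[k] g →ₗ[k] g ⊗[k] g :=
  TensorProduct.map (LieAlgebra.ad k g x) LinearMap.id
    + TensorProduct.map LinearMap.id (LieAlgebra.ad k g x)

/-- The cyclic rotation `(a⊗b)⊗c ↦ (c⊗a)⊗b` on `(g⊗g)⊗g`. -/
noncomputable def tCyc (k g : Type*) [CommRing k] [AddCommGroup g] [Module k g] :
    (g ⊗[k] g) ⊗[k] g →ₗ[k] (g ⊗[k] g) ⊗[k] g :=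
  ((TensorProduct.assoc k g g g).symm.toLinearMap).comp
    (TensorProduct.comm k (g ⊗[k] g) g).toLinearMap

/-- For submodules `P Q ⊆ g`, the image of `P ⊗ Q` in `g ⊗ g`. -/
noncomputable def tsub (k g : Type*) [CommRing k] [AddCommGroup g] [Module k g]
    (P Q : Submodule k g) : Submodule k (g ⊗[k] g) :=
  LinearMap.range (TensorProduct.map P.subtype Q.subtype)

/-- The degree (valency) of a vertex `e` in the graph with edge set `A` and
endpoint maps `src`, `tgt`. -/
def deg {V A : Type*} [Fintype A] [DecidableEq V] (src tgt : A → V) (e : V) : ℕ :=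
  (Finset.univ.filter (fun a : A => src a = e ∨ tgt a = e)).card


set_option linter.unusedSectionVars false

section Comb
variable {V A : Type*} [Fintype A] [DecidableEq V]
variable (src tgt : A → V)

def oth (e : V) (a : A) : V := if src a = e then tgt a else src a

variable {src tgt}

lemma oth_spec {e : V} {a : A} (h : src a = e ∨ tgt a = e) :
    (src a = e ∧ tgt a = oth src tgt e a) ∨ (src a = oth src tgt e a ∧ tgt a = e) := by
  unfold oth
  rcases h with h | h
  · left; simp [h]
  · by_cases h' : src a = e
    · left; simp [h']
    · right; simp [h', h]

lemma oth_ne (hloop : ∀ a, src a ≠ tgt a) {e : V} {a : A} (h : src a = e ∨ tgt a = e) :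
    oth src tgt e a ≠ e := by
  intro hh
  rcases oth_spec h with ⟨h1, h2⟩ | ⟨h1, h2⟩
  · exact hloop a (h1.trans (hh.symm.trans h2.symm))
  · exact hloop a (h1.trans (hh.trans h2.symm))

lemma oth_inj
    (hsimple : ∀ a b : A,
      (src a = src b ∧ tgt a = tgt b) ∨ (src a = tgt b ∧ tgt a = src b) → a = b)
    {e : V} {a b : A} (ha : src a = e ∨ tgt a = e) (hb : src b = e ∨ tgt b = e)
    (hne : a ≠ b) : oth src tgt e a ≠ oth src tgt e b := by
  intro hoth
  rcases oth_spec ha with ⟨h1, h2⟩ | ⟨h1, h2⟩ <;> rcases oth_spec hb with ⟨g1, g2⟩ | ⟨g1, g2⟩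
  · exact hne (hsimple a b (Or.inl ⟨h1.trans g1.symm, (h2.trans hoth).trans g2.symm⟩))
  · exact hne (hsimple a b (Or.inr ⟨h1.trans g2.symm, (h2.trans hoth).trans g1.symm⟩))
  · exact hne (hsimple a b (Or.inr ⟨(h1.trans hoth).trans g2.symm, h2.trans g1.symm⟩))
  · exact hne (hsimple a b (Or.inl ⟨(h1.trans hoth).trans g1.symm, h2.trans g2.symm⟩))

lemma exists_two_edges {e : V} (hdeg : 2 ≤ deg src tgt e) :
    ∃ a b : A, (src a = e ∨ tgt a = e) ∧ (src b = e ∨ tgt b = e) ∧ a ≠ b := by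
  classical
  obtain ⟨a, ha, b, hb, hab⟩ := Finset.one_lt_card.mp (lt_of_lt_of_le one_lt_two hdeg)
  simp only [deg, Finset.mem_filter, Finset.mem_univ, true_and] at ha hb
  exact ⟨a, b, ha, hb, hab⟩

lemma exists_edge_avoid
    (hsimple : ∀ a b : A,
      (src a = src b ∧ tgt a = tgt b) ∨ (src a = tgt b ∧ tgt a = src b) → a = b)
    {e : V} (hdeg : 2 ≤ deg src tgt e) (j : V) :
    ∃ a : A, (src a = e ∨ tgt a = e) ∧ oth src tgt e a ≠ j := by
  classical
  obtain ⟨a, b, ha, hb, hab⟩ := exists_two_edges hdeg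
  by_cases h : oth src tgt e a = j
  · exact ⟨b, hb, fun hh => oth_inj hsimple ha hb hab (h.trans hh.symm)⟩
  · exact ⟨a, ha, h⟩

end Comb

section Cores
variable {k V A : Type*} [Field k] [CharZero k]
    [Fintype V] [Fintype A] [DecidableEq V] [DecidableEq A]
variable {src tgt : A → V}

/-- core of part (i), W⊗W block -/
lemma core1
    (hloop : ∀ a, src a ≠ tgt a)
    (hsimple : ∀ a b : A,
      (src a = src b ∧ tgt a = tgt b) ∨ (src a = tgt b ∧ tgt a = src b) → a = b)
    (hdeg : ∀ e : V, 2 ≤ deg src tgt e)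
    (φ : V → k)
    (REL : ∀ (i : V) (β : A),
      (if src β = i then φ (tgt β) else 0) - (if tgt β = i then φ (src β) else 0) = 0) :
    ∀ l : V, φ l = 0 := by
  intro l
  obtain ⟨e, he, -⟩ := exists_edge_avoid hsimple (hdeg l) l
  have hol : oth src tgt l e ≠ l := oth_ne hloop he
  have h := REL (oth src tgt l e) e
  rcases oth_spec he with ⟨h1, h2⟩ | ⟨h1, h2⟩
  · rw [if_neg (fun hh : src e = oth src tgt l e => hol (hh.symm.trans h1)),
      if_pos h2, h1] at h
    linear_combination -h
  · rw [if_pos h1, if_neg (fun hh : tgt e = oth src tgt l e => hol (hh.symm.trans h2)),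
      h2] at h
    linear_combination h

/-- core of part (i), W⊗z block -/
lemma core2
    (hloop : ∀ a, src a ≠ tgt a)
    (hsimple : ∀ a b : A,
      (src a = src b ∧ tgt a = tgt b) ∨ (src a = tgt b ∧ tgt a = src b) → a = b)
    (hdeg : ∀ e : V, 2 ≤ deg src tgt e)
    (c : V → A → k)
    (REL : ∀ (i : V) (β b : A),
      ((if src β = i then c (tgt β) b else 0) - (if tgt β = i then c (src β) b else 0))
      - ((if src b = i then c (tgt b) β else 0) - (if tgt b = i then c (src b) β else 0)) = 0) :
    ∀ (l : V) (a : A), c l a = 0 := by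
  intro l a
  by_cases hex : ∃ e : A, (src e = l ∨ tgt e = l) ∧
      src a ≠ oth src tgt l e ∧ tgt a ≠ oth src tgt l e
  · obtain ⟨e, he, hs, ht⟩ := hex
    have hol : oth src tgt l e ≠ l := oth_ne hloop he
    have h := REL (oth src tgt l e) e a
    rw [if_neg hs, if_neg ht] at h
    rcases oth_spec he with ⟨h1, h2⟩ | ⟨h1, h2⟩
    · rw [if_neg (fun hh : src e = oth src tgt l e => hol (hh.symm.trans h1)),
        if_pos h2, h1] at h
      linear_combination -h
    · rw [if_pos h1, if_neg (fun hh : tgt e = oth src tgt l e => hol (hh.symm.trans h2)),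
        h2] at h
      linear_combination h
  · -- triangle case
    have hx : ∀ e : A, (src e = l ∨ tgt e = l) →
        src a = oth src tgt l e ∨ tgt a = oth src tgt l e := by
      intro e hi
      by_contra hc
      push_neg at hc
      exact hex ⟨e, hi, hc.1, hc.2⟩
    obtain ⟨e1, e2, he1, he2, hne⟩ := exists_two_edges (hdeg l)
    have hd := oth_inj hsimple he1 he2 hne
    have hcase : ∃ β γ : A, (src β = l ∨ tgt β = l) ∧ (src γ = l ∨ tgt γ = l) ∧
        src a = oth src tgt l β ∧ tgt a = oth src tgt l γ := by
      rcases hx e1 he1 with h1 | h1 <;> rcases hx e2 he2 with h2 | h2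
      · exact absurd (h1.symm.trans h2) hd
      · exact ⟨e1, e2, he1, he2, h1, h2⟩
      · exact ⟨e2, e1, he2, he1, h2, h1⟩
      · exact absurd (h1.symm.trans h2) hd
    obtain ⟨β, γ, hβ, hγ, hsa, hta⟩ := hcase
    have hsal : src a ≠ l := hsa.trans_ne (oth_ne hloop hβ)
    have htal : tgt a ≠ l := hta.trans_ne (oth_ne hloop hγ)
    have hst : src a ≠ tgt a := hloop a
    have e1' := REL (src a) β a
    have e2' := REL l γ β
    have e3' := REL (tgt a) γ a
    rcases oth_spec hβ with ⟨b1, b2⟩ | ⟨b1, b2⟩ <;> rcases oth_spec hγ with ⟨g1, g2⟩ | ⟨g1, g2⟩ <;>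
      simp only [b1, b2, g1, g2] at e1' e2' e3' <;>
      simp only [← hsa, ← hta] at e1' e2' e3' <;>
      simp only [hsal, htal, hst, Ne.symm hsal, Ne.symm htal, Ne.symm hst,
        eq_self_iff_true, if_true, if_false, ite_true, ite_false, sub_zero, zero_sub] at e1' e2' e3' <;>
      first
        | linear_combination (e1' + e2' + e3') / 2
        | linear_combination (e1' + e2' - e3') / 2
        | linear_combination (e1' - e2' + e3') / 2
        | linear_combination (e1' - e2' - e3') / 2
        | linear_combination (-e1' + e2' + e3') / 2
        | linear_combination (-e1' + e2' - e3') / 2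
        | linear_combination (-e1' - e2' + e3') / 2
        | linear_combination (-e1' - e2' - e3') / 2

/-- core of part (iii) -/
lemma core3
    (hloop : ∀ a, src a ≠ tgt a)
    (hsimple : ∀ a b : A,
      (src a = src b ∧ tgt a = tgt b) ∨ (src a = tgt b ∧ tgt a = src b) → a = b)
    (hdeg : ∀ e : V, 2 ≤ deg src tgt e)
    (P : V → V → V → k)
    (hanti : ∀ j l m, P j m l = - P j l m)
    (REL : ∀ (i j : V) (β : A) (m : V),
      ((if src β = i then P j (tgt β) m else 0) - (if tgt β = i then P j (src β) m else 0))
      = ((if src β = j then P i (tgt β) m else 0) - (if tgt β = j then P i (src β) m else 0))) :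
    ∀ j l m, P j l m = 0 := by
  have step1 : ∀ (j l m : V), l ≠ j → P j l m = 0 := by
    intro j l m hlj
    obtain ⟨e, he, hoj⟩ := exists_edge_avoid hsimple (hdeg l) j
    have hol : oth src tgt l e ≠ l := oth_ne hloop he
    have h := REL (oth src tgt l e) j e m
    rcases oth_spec he with ⟨h1, h2⟩ | ⟨h1, h2⟩
    · -- src e = l, tgt e = oth
      rw [if_neg (fun hh : src e = j => hlj (h1.symm.trans hh)),
        if_neg (fun hh : tgt e = j => hoj (h2.symm.trans hh)),
        if_neg (fun hh : src e = oth src tgt l e => hol (hh.symm.trans h1)),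
        if_pos h2, h1] at h
      linear_combination -h
    · rw [if_neg (fun hh : src e = j => hoj (h1.symm.trans hh)),
        if_neg (fun hh : tgt e = j => hlj (h2.symm.trans hh)),
        if_pos h1, if_neg (fun hh : tgt e = oth src tgt l e => hol (hh.symm.trans h2)),
        h2] at h
      linear_combination h
  intro j l m
  by_cases hlj : l = j
  · rw [hlj]
    by_cases hml : m = j
    · rw [hml]
      linear_combination (hanti j j j) / 2
    · rw [hanti j m j, step1 j m j hml]
      ring
  · exact step1 j l m hlj

end Cores

section Alg
variable {k V A N : Type*} [Field k] [CharZero k]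
    [Fintype V] [Fintype A] [DecidableEq V] [DecidableEq A]
    [LieRing N] [LieAlgebra k N]

variable (k) in
/-- structure constants of `⁅e_i, B p⁆` in the central basis -/
def gc (src tgt : A → V) (i : V) (p : V ⊕ A) (a : A) : k :=
  match p with
  | Sum.inl l =>
      (if src a = i ∧ tgt a = l then 1 else 0) - (if src a = l ∧ tgt a = i then 1 else 0)
  | Sum.inr _ => 0

variable (src tgt : A → V)
    (hloop : ∀ a, src a ≠ tgt a)
    (hsimple : ∀ a b : A,
      (src a = src b ∧ tgt a = tgt b) ∨ (src a = tgt b ∧ tgt a = src b) → a = b)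
    (B : Module.Basis (V ⊕ A) k N)
    (hbz : ∀ (a : A) (x : N), ⁅B (Sum.inr a), x⁆ = 0)
    (hbe : ∀ a : A, ⁅B (Sum.inl (src a)), B (Sum.inl (tgt a))⁆ = B (Sum.inr a))
    (hbe0 : ∀ i j : V,
      (∀ a : A, ¬((src a = i ∧ tgt a = j) ∨ (src a = j ∧ tgt a = i))) →
      ⁅B (Sum.inl i), B (Sum.inl j)⁆ = 0)

include hloop hsimple hbz hbe hbe0 in
lemma brkt (i : V) (p : V ⊕ A) :
    ⁅B (Sum.inl i), B p⁆ = ∑ a : A, gc k src tgt i p a • B (Sum.inr a) := by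
  classical
  match p with
  | Sum.inr b =>
    have h : ⁅B (Sum.inl i), B (Sum.inr b)⁆ = 0 := by
      rw [← lie_skew, hbz b]; simp
    rw [h]
    simp [gc]
  | Sum.inl l =>
    by_cases h1 : ∃ a, src a = i ∧ tgt a = l
    · obtain ⟨a0, ha1, ha2⟩ := h1
      have hil : i ≠ l := by
        intro hh; exact hloop a0 (by rw [ha1, ha2, hh])
      have hLHS : ⁅B (Sum.inl i), B (Sum.inl l)⁆ = B (Sum.inr a0) := by
        rw [← ha1, ← ha2]; exact hbe a0
      have key : ∀ a : A, gc k src tgt i (Sum.inl l) a = if a = a0 then 1 else 0 := by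
        intro a
        by_cases ha : a = a0
        · subst ha
          have hno : ¬(src a = l ∧ tgt a = i) := by
            rintro ⟨hc1, _⟩
            exact hil (ha1.symm.trans hc1)
          simp only [gc]
          rw [if_pos (And.intro ha1 ha2), if_neg hno]; simp
        · rw [if_neg ha]
          simp only [gc]
          have c1 : ¬(src a = i ∧ tgt a = l) := by
            rintro ⟨hc1, hc2⟩
            exact ha (hsimple a a0 (Or.inl ⟨hc1.trans ha1.symm, hc2.trans ha2.symm⟩))
          have c2 : ¬(src a = l ∧ tgt a = i) := by
            rintro ⟨hc1, hc2⟩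
            exact ha (hsimple a a0 (Or.inr ⟨hc1.trans ha2.symm, hc2.trans ha1.symm⟩))
          rw [if_neg c1, if_neg c2]; ring
      rw [hLHS]
      rw [Finset.sum_congr rfl fun a _ => by rw [key a]]
      simp [ite_smul]
    · by_cases h2 : ∃ a, src a = l ∧ tgt a = i
      · obtain ⟨a0, ha1, ha2⟩ := h2
        have hil : i ≠ l := by
          intro hh; exact hloop a0 (by rw [ha1, ha2, hh])
        have hLHS : ⁅B (Sum.inl i), B (Sum.inl l)⁆ = -B (Sum.inr a0) := by
          rw [← lie_skew]
          rw [← ha1, ← ha2, hbe a0]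
        have key : ∀ a : A, gc k src tgt i (Sum.inl l) a = if a = a0 then -1 else 0 := by
          intro a
          by_cases ha : a = a0
          · subst ha
            have hno : ¬(src a = i ∧ tgt a = l) := by
              rintro ⟨hc1, _⟩
              exact hil (hc1.symm.trans ha1)
            simp only [gc]
            rw [if_pos (And.intro ha1 ha2), if_neg hno]; simp
          · rw [if_neg ha]
            simp only [gc]
            have c1 : ¬(src a = i ∧ tgt a = l) := by
              rintro ⟨hc1, hc2⟩
              exact ha (hsimple a a0 (Or.inr ⟨hc1.trans ha2.symm, hc2.trans ha1.symm⟩))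
            have c2 : ¬(src a = l ∧ tgt a = i) := by
              rintro ⟨hc1, hc2⟩
              exact ha (hsimple a a0 (Or.inl ⟨hc1.trans ha1.symm, hc2.trans ha2.symm⟩))
            rw [if_neg c1, if_neg c2]; ring
        rw [hLHS]
        rw [Finset.sum_congr rfl fun a _ => by rw [key a]]
        simp [ite_smul]
      · push_neg at h1 h2
        have hLHS : ⁅B (Sum.inl i), B (Sum.inl l)⁆ = 0 := by
          apply hbe0
          intro a
          rintro (⟨hc1, hc2⟩ | ⟨hc1, hc2⟩)
          · exact h1 a hc1 hc2
          · exact h2 a hc1 hc2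
        rw [hLHS]
        have key : ∀ a : A, gc k src tgt i (Sum.inl l) a = 0 := by
          intro a
          simp only [gc]
          rw [if_neg (fun ⟨hc1, hc2⟩ => h1 a hc1 hc2), if_neg (fun ⟨hc1, hc2⟩ => h2 a hc1 hc2)]
          ring
        rw [Finset.sum_congr rfl fun a _ => by rw [key a]]
        simp


include hloop hsimple hbz hbe hbe0 in
lemma repr_brkt_inl (i : V) (p : V ⊕ A) (m : V) :
    B.repr ⁅B (Sum.inl i), B p⁆ (Sum.inl m) = 0 := by
  rw [brkt src tgt hloop hsimple B hbz hbe hbe0 i p]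
  rw [map_sum]
  rw [Finset.sum_apply']
  apply Finset.sum_eq_zero
  intro a _
  rw [map_smul, Finsupp.smul_apply, B.repr_self, Finsupp.single_apply]
  simp

include hloop hsimple hbz hbe hbe0 in
lemma repr_brkt_inr (i : V) (p : V ⊕ A) (b : A) :
    B.repr ⁅B (Sum.inl i), B p⁆ (Sum.inr b) = gc k src tgt i p b := by
  rw [brkt src tgt hloop hsimple B hbz hbe hbe0 i p]
  rw [map_sum]
  rw [Finset.sum_apply']
  rw [Finset.sum_congr rfl (fun a (_ : a ∈ Finset.univ) => by
    rw [map_smul, Finsupp.smul_apply, B.repr_self, Finsupp.single_apply])]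
  simp [Sum.inr.injEq, smul_eq_mul, mul_ite, mul_one, mul_zero, Finset.sum_ite_eq']


lemma coord_tAct (x : N) (ω : N ⊗[k] N) (r s : V ⊕ A) :
    (B.tensorProduct B).repr (tAct k N x ω) (r, s)
      = ∑ pq : (V ⊕ A) × (V ⊕ A), (B.tensorProduct B).repr ω pq *
          (B.repr ⁅x, B pq.1⁆ r * (if pq.2 = s then 1 else 0)
            + (if pq.1 = r then 1 else 0) * B.repr ⁅x, B pq.2⁆ s) := by
  conv_lhs => rw [← (B.tensorProduct B).sum_repr ω]
  rw [map_sum, map_sum, Finset.sum_apply']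
  apply Finset.sum_congr rfl
  rintro ⟨p, q⟩ _
  rw [map_smul, map_smul, Finsupp.smul_apply]
  have h1 : tAct k N x ((B.tensorProduct B) (p, q))
      = ⁅x, B p⁆ ⊗ₜ[k] B q + B p ⊗ₜ[k] ⁅x, B q⁆ := by
    rw [Module.Basis.tensorProduct_apply]
    simp [tAct, TensorProduct.map_tmul, LieAlgebra.ad_apply]
  rw [h1, map_add, Finsupp.add_apply, Module.Basis.tensorProduct_repr_tmul_apply,
    Module.Basis.tensorProduct_repr_tmul_apply, B.repr_self, B.repr_self,
    Finsupp.single_apply, Finsupp.single_apply]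
  simp only [smul_eq_mul]
  ring

lemma coord_comm (ω : N ⊗[k] N) (p q : V ⊕ A) :
    (B.tensorProduct B).repr ((TensorProduct.comm k N N) ω) (p, q)
      = (B.tensorProduct B).repr ω (q, p) := by
  conv_lhs => rw [← (B.tensorProduct B).sum_repr ω]
  rw [map_sum, map_sum, Finset.sum_apply']
  have step : ∀ rs : (V ⊕ A) × (V ⊕ A),
      (B.tensorProduct B).repr ((TensorProduct.comm k N N)
          ((B.tensorProduct B).repr ω rs • (B.tensorProduct B) rs)) (p, q)
        = (B.tensorProduct B).repr ω rs *
            ((if rs.2 = p then 1 else 0) * (if rs.1 = q then 1 else 0)) := by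
    rintro ⟨r, s⟩
    rw [map_smul, map_smul, Finsupp.smul_apply, Module.Basis.tensorProduct_apply,
      TensorProduct.comm_tmul, Module.Basis.tensorProduct_repr_tmul_apply,
      B.repr_self, B.repr_self, Finsupp.single_apply, Finsupp.single_apply]
    simp only [smul_eq_mul]
    ring
  rw [Finset.sum_congr rfl fun rs _ => step rs]
  rw [Fintype.sum_prod_type_right]
  have inner : ∀ s, (∑ r, (B.tensorProduct B).repr ω (r, s) *
      ((if s = p then 1 else 0) * (if r = q then 1 else 0)))
      = if s = p then (B.tensorProduct B).repr ω (q, s) else 0 := by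
    intro s
    by_cases hs : s = p <;> simp [hs, mul_ite, mul_one, mul_zero, Finset.sum_ite_eq']
  rw [Finset.sum_congr rfl fun s _ => inner s]
  simp [Finset.sum_ite_eq']

lemma collapse1 (F : (V ⊕ A) × (V ⊕ A) → k) (G : V ⊕ A → k)
    (hG : ∀ a : A, G (Sum.inr a) = 0) (s : V ⊕ A) :
    (∑ pq : (V ⊕ A) × (V ⊕ A), F pq * (G pq.1 * (if pq.2 = s then 1 else 0)))
      = ∑ l : V, F (Sum.inl l, s) * G (Sum.inl l) := by
  rw [Fintype.sum_prod_type]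
  have inner : ∀ p, (∑ q, F (p, q) * (G p * (if q = s then 1 else 0))) = F (p, s) * G p := by
    intro p
    simp [mul_ite, mul_one, mul_zero, Finset.sum_ite_eq']
  rw [Finset.sum_congr rfl fun p _ => inner p]
  rw [Fintype.sum_sum_type]
  simp [hG]

lemma collapse2 (F : (V ⊕ A) × (V ⊕ A) → k) (G : V ⊕ A → k)
    (hG : ∀ a : A, G (Sum.inr a) = 0) (r : V ⊕ A) :
    (∑ pq : (V ⊕ A) × (V ⊕ A), F pq * ((if pq.1 = r then 1 else 0) * G pq.2))
      = ∑ l : V, F (r, Sum.inl l) * G (Sum.inl l) := by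
  rw [Fintype.sum_prod_type_right]
  have inner : ∀ q, (∑ p, F (p, q) * ((if p = r then 1 else 0) * G q)) = F (r, q) * G q := by
    intro q
    simp [mul_ite, ite_mul, mul_one, mul_zero, one_mul, zero_mul, Finset.sum_ite_eq']
  rw [Finset.sum_congr rfl fun q _ => inner q]
  rw [Fintype.sum_sum_type]
  simp [hG]

include hloop hsimple hbz hbe hbe0 in
lemma coordA (i : V) (ω : N ⊗[k] N) (β : A) (m : V) :
    (B.tensorProduct B).repr (tAct k N (B (Sum.inl i)) ω) (Sum.inr β, Sum.inl m)
      = ∑ l : V, (B.tensorProduct B).repr ω (Sum.inl l, Sum.inl m)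
          * gc k src tgt i (Sum.inl l) β := by
  rw [coord_tAct B]
  rw [Finset.sum_congr rfl fun pq _ => by
    rw [repr_brkt_inl src tgt hloop hsimple B hbz hbe hbe0 i pq.2 m,
      repr_brkt_inr src tgt hloop hsimple B hbz hbe hbe0 i pq.1 β]]
  simp only [mul_zero, add_zero]
  exact collapse1 (fun pq => (B.tensorProduct B).repr ω pq) (fun p => gc k src tgt i p β) (fun a => rfl) (Sum.inl m)

include hloop hsimple hbz hbe hbe0 in
lemma coordB (i : V) (ω : N ⊗[k] N) (β b : A) :
    (B.tensorProduct B).repr (tAct k N (B (Sum.inl i)) ω) (Sum.inr β, Sum.inr b)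
      = (∑ l : V, (B.tensorProduct B).repr ω (Sum.inl l, Sum.inr b)
            * gc k src tgt i (Sum.inl l) β)
        + ∑ l : V, (B.tensorProduct B).repr ω (Sum.inr β, Sum.inl l)
            * gc k src tgt i (Sum.inl l) b := by
  rw [coord_tAct B]
  rw [Finset.sum_congr rfl fun pq _ => by
    rw [repr_brkt_inr src tgt hloop hsimple B hbz hbe hbe0 i pq.2 b,
      repr_brkt_inr src tgt hloop hsimple B hbz hbe hbe0 i pq.1 β]]
  simp only [mul_add]
  rw [Finset.sum_add_distrib]
  rw [collapse1 (fun pq => (B.tensorProduct B).repr ω pq) (fun p => gc k src tgt i p β)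
      (fun a => rfl) (Sum.inr b),
    collapse2 (fun pq => (B.tensorProduct B).repr ω pq) (fun p => gc k src tgt i p b)
      (fun a => rfl) (Sum.inr β)]


lemma repr_spanned {u : Set (V ⊕ A)} {z : N} (hz : z ∈ Submodule.span k (B '' u))
    {p : V ⊕ A} (hp : B.repr z p ≠ 0) : p ∈ u :=
  (B.mem_span_image.mp hz) (Finsupp.mem_support_iff.mpr hp)

lemma mem_tsub_iff (u v : Set (V ⊕ A)) (x : N ⊗[k] N) :
    x ∈ tsub k N (Submodule.span k (B '' u)) (Submodule.span k (B '' v)) ↔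
      ∀ p q : V ⊕ A, (B.tensorProduct B).repr x (p, q) ≠ 0 → p ∈ u ∧ q ∈ v := by
  constructor
  · rintro ⟨y, rfl⟩
    induction y using TensorProduct.induction_on with
    | zero => intro p q h; rw [map_zero, map_zero] at h; simp at h
    | tmul a b =>
      intro p q h
      rw [TensorProduct.map_tmul] at h
      simp only [Submodule.coe_subtype] at h
      rw [Module.Basis.tensorProduct_repr_tmul_apply] at h
      rw [smul_eq_mul] at h
      exact ⟨repr_spanned B a.2 (right_ne_zero_of_mul h),
        repr_spanned B b.2 (left_ne_zero_of_mul h)⟩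
    | add y1 y2 ih1 ih2 =>
      intro p q h
      rw [map_add, map_add, Finsupp.add_apply] at h
      by_cases h1 : (B.tensorProduct B).repr
          (TensorProduct.map (Submodule.span k (B '' u)).subtype
            (Submodule.span k (B '' v)).subtype y1) (p, q) = 0
      · rw [h1, zero_add] at h
        exact ih2 p q h
      · exact ih1 p q h1
  · intro H
    rw [← (B.tensorProduct B).sum_repr x]
    apply Submodule.sum_mem
    rintro ⟨p, q⟩ _
    by_cases h0 : (B.tensorProduct B).repr x (p, q) = 0
    · rw [h0, zero_smul]; exact Submodule.zero_mem _
    · apply Submodule.smul_mem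
      obtain ⟨hp, hq⟩ := H p q h0
      rw [Module.Basis.tensorProduct_apply]
      exact ⟨(⟨B p, Submodule.subset_span (Set.mem_image_of_mem B hp)⟩ :
            Submodule.span k (B '' u)) ⊗ₜ[k]
          (⟨B q, Submodule.subset_span (Set.mem_image_of_mem B hq)⟩ :
            Submodule.span k (B '' v)),
        by rw [TensorProduct.map_tmul]; rfl⟩

include hbz in
lemma central {z : N} (hz : z ∈ Submodule.span k (Set.range fun a : A => B (Sum.inr a)))
    (y : N) : ⁅z, y⁆ = 0 := by
  induction hz using Submodule.span_induction with
  | mem w hw => obtain ⟨a, rfl⟩ := hw; exact hbz a y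
  | zero => simp
  | add x1 x2 hx1 hx2 ih1 ih2 => rw [add_lie, ih1, ih2, add_zero]
  | smul c x1 hx1 ih => rw [smul_lie, ih, smul_zero]

lemma tAct_eq_zero {x : N} (hx : ∀ y : N, ⁅x, y⁆ = 0) : tAct k N x = 0 := by
  apply TensorProduct.ext'
  intro u v
  simp [tAct, LieAlgebra.ad_apply, hx]

include hbz in
lemma tAct_on_tsub (x : N) {ω : N ⊗[k] N}
    (hω : ω ∈ tsub k N (Submodule.span k (Set.range fun a : A => B (Sum.inr a)))
      (Submodule.span k (Set.range fun a : A => B (Sum.inr a)))) :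
    tAct k N x ω = 0 := by
  obtain ⟨y, rfl⟩ := hω
  induction y using TensorProduct.induction_on with
  | zero => simp
  | tmul p q =>
    rw [TensorProduct.map_tmul]
    have hp : ⁅x, (p : N)⁆ = 0 := by
      rw [← lie_skew, central B hbz p.2 x, neg_zero]
    have hq : ⁅x, (q : N)⁆ = 0 := by
      rw [← lie_skew, central B hbz q.2 x, neg_zero]
    simp [tAct, LieAlgebra.ad_apply, hp, hq]
  | add y1 y2 ih1 ih2 =>
    rw [map_add, map_add, ih1, ih2, add_zero]

lemma sumV (φ : V → k) (i : V) (e : A) :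
    (∑ l : V, φ l * gc k src tgt i (Sum.inl l) e)
      = (if src e = i then φ (tgt e) else 0) - (if tgt e = i then φ (src e) else 0) := by
  by_cases h1 : src e = i <;> by_cases h2 : tgt e = i <;>
    simp [gc, h1, h2, mul_sub, Finset.sum_sub_distrib, mul_ite, Finset.sum_ite_eq]

lemma tmul_mem_tsub {P Q : Submodule k N} {x y : N} (hx : x ∈ P) (hy : y ∈ Q) :
    x ⊗ₜ[k] y ∈ tsub k N P Q :=
  ⟨(⟨x, hx⟩ : P) ⊗ₜ[k] (⟨y, hy⟩ : Q), by rw [TensorProduct.map_tmul]; rfl⟩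

include hloop hsimple hbz hbe hbe0 in
lemma part1fwd (hdeg : ∀ e : V, 2 ≤ deg src tgt e) (ω : N ⊗[k] N)
    (hanti : TensorProduct.comm k N N ω = -ω)
    (hinv : ∀ x : N, tAct k N x ω = 0) :
    ∀ p q : V ⊕ A, (B.tensorProduct B).repr ω (p, q) ≠ 0 →
      p ∈ Set.range (Sum.inr : A → V ⊕ A) ∧ q ∈ Set.range (Sum.inr : A → V ⊕ A) := by
  have hA : ∀ p q : V ⊕ A,
      (B.tensorProduct B).repr ω (q, p) = - (B.tensorProduct B).repr ω (p, q) := by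
    intro p q
    have h := coord_comm B ω q p
    rw [hanti, map_neg, Finsupp.neg_apply] at h
    linear_combination - h
  have hWW : ∀ l m : V, (B.tensorProduct B).repr ω (Sum.inl l, Sum.inl m) = 0 := by
    intro l m
    refine core1 hloop hsimple hdeg
      (fun l => (B.tensorProduct B).repr ω (Sum.inl l, Sum.inl m)) ?_ l
    intro i β
    have h := coordA src tgt hloop hsimple B hbz hbe hbe0 i ω β m
    rw [hinv (B (Sum.inl i)), map_zero, Finsupp.zero_apply,
      sumV src tgt (fun l => (B.tensorProduct B).repr ω (Sum.inl l, Sum.inl m)) i β] at h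
    exact h.symm
  have hWZ : ∀ (l : V) (b : A), (B.tensorProduct B).repr ω (Sum.inl l, Sum.inr b) = 0 := by
    refine core2 hloop hsimple hdeg
      (fun l b => (B.tensorProduct B).repr ω (Sum.inl l, Sum.inr b)) ?_
    intro i β b
    have h := coordB src tgt hloop hsimple B hbz hbe hbe0 i ω β b
    rw [hinv (B (Sum.inl i)), map_zero, Finsupp.zero_apply] at h
    have h2 : (∑ l : V, (B.tensorProduct B).repr ω (Sum.inr β, Sum.inl l)
          * gc k src tgt i (Sum.inl l) b)
        = - ∑ l : V, (B.tensorProduct B).repr ω (Sum.inl l, Sum.inr β)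
          * gc k src tgt i (Sum.inl l) b := by
      rw [← Finset.sum_neg_distrib]
      apply Finset.sum_congr rfl
      intro l _
      rw [hA (Sum.inl l) (Sum.inr β)]
      ring
    rw [h2,
      sumV src tgt (fun l => (B.tensorProduct B).repr ω (Sum.inl l, Sum.inr b)) i β,
      sumV src tgt (fun l => (B.tensorProduct B).repr ω (Sum.inl l, Sum.inr β)) i b] at h
    linear_combination - h
  rintro (l | β) (m | b) hne
  · exact absurd (hWW l m) hne
  · exact absurd (hWZ l b) hne
  · exact absurd (by rw [hA (Sum.inl m) (Sum.inr β), hWZ m β, neg_zero]) hne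
  · exact ⟨⟨β, rfl⟩, ⟨b, rfl⟩⟩

lemma range_inr_image :
    (Set.range fun a : A => B (Sum.inr a)) = B '' Set.range Sum.inr := by
  ext x
  constructor
  · rintro ⟨a, rfl⟩; exact ⟨Sum.inr a, ⟨a, rfl⟩, rfl⟩
  · rintro ⟨p, ⟨a, rfl⟩, rfl⟩; exact ⟨a, rfl⟩

lemma range_inl_image :
    (Set.range fun i : V => B (Sum.inl i)) = B '' Set.range Sum.inl := by
  ext x
  constructor
  · rintro ⟨i, rfl⟩; exact ⟨Sum.inl i, ⟨i, rfl⟩, rfl⟩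
  · rintro ⟨p, ⟨i, rfl⟩, rfl⟩; exact ⟨i, rfl⟩

include hloop hsimple hbz hbe hbe0 in
lemma part1full (hdeg : ∀ e : V, 2 ≤ deg src tgt e) (ω : N ⊗[k] N)
    (hanti : TensorProduct.comm k N N ω = -ω)
    (hinv : ∀ x : N, tAct k N x ω = 0) :
    ω ∈ tsub k N (Submodule.span k (Set.range fun a : A => B (Sum.inr a)))
        (Submodule.span k (Set.range fun a : A => B (Sum.inr a))) := by
  rw [range_inr_image B, mem_tsub_iff B]
  intro p q h
  exact part1fwd src tgt hloop hsimple B hbz hbe hbe0 hdeg ω hanti hinv p q h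

include hloop hsimple hbz hbe hbe0 in
lemma part3z (δ : N →ₗ[k] N ⊗[k] N) (hdeg : ∀ e : V, 2 ≤ deg src tgt e)
    (hanti : ∀ x, TensorProduct.comm k N N (δ x) = - δ x)
    (hcoc : ∀ x y, δ ⁅x, y⁆ = tAct k N x (δ y) - tAct k N y (δ x)) :
    ∀ z ∈ Submodule.span k (Set.range fun a : A => B (Sum.inr a)),
      δ z ∈ tsub k N (Submodule.span k (Set.range fun a : A => B (Sum.inr a)))
          (Submodule.span k (Set.range fun a : A => B (Sum.inr a))) := by
  intro z hz
  have hinv : ∀ x : N, tAct k N x (δ z) = 0 := by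
    intro x
    have h := hcoc x z
    have h1 : ⁅x, z⁆ = 0 := by rw [← lie_skew, central B hbz hz x, neg_zero]
    have h2 : tAct k N z = 0 := tAct_eq_zero (central B hbz hz)
    rw [h1, map_zero, h2, LinearMap.zero_apply, sub_zero] at h
    exact h.symm
  exact part1full src tgt hloop hsimple B hbz hbe hbe0 hdeg (δ z) (hanti z) hinv

include hloop hsimple hbz hbe hbe0 in
lemma bracket_mem_z (i j : V) :
    ⁅B (Sum.inl i), B (Sum.inl j)⁆
      ∈ Submodule.span k (Set.range fun a : A => B (Sum.inr a)) := by
  rw [brkt src tgt hloop hsimple B hbz hbe hbe0 i (Sum.inl j)]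
  apply Submodule.sum_mem
  intro a _
  exact Submodule.smul_mem _ _ (Submodule.subset_span ⟨a, rfl⟩)

include hloop hsimple hbz hbe hbe0 in
lemma part3w (δ : N →ₗ[k] N ⊗[k] N) (hdeg : ∀ e : V, 2 ≤ deg src tgt e)
    (hanti : ∀ x, TensorProduct.comm k N N (δ x) = - δ x)
    (hcoc : ∀ x y, δ ⁅x, y⁆ = tAct k N x (δ y) - tAct k N y (δ x)) :
    ∀ w ∈ Submodule.span k (Set.range fun i : V => B (Sum.inl i)),
      δ w ∈ tsub k N (Submodule.span k (Set.range fun i : V => B (Sum.inl i)))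
              (Submodule.span k (Set.range fun a : A => B (Sum.inr a)))
          ⊔ tsub k N (Submodule.span k (Set.range fun a : A => B (Sum.inr a)))
              (Submodule.span k (Set.range fun i : V => B (Sum.inl i)))
          ⊔ tsub k N (Submodule.span k (Set.range fun a : A => B (Sum.inr a)))
              (Submodule.span k (Set.range fun a : A => B (Sum.inr a))) := by
  have hP : ∀ (j l m : V),
      (B.tensorProduct B).repr (δ (B (Sum.inl j))) (Sum.inl l, Sum.inl m) = 0 := by
    refine core3 hloop hsimple hdeg
      (fun j l m => (B.tensorProduct B).repr (δ (B (Sum.inl j))) (Sum.inl l, Sum.inl m))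
      ?_ ?_
    · intro j l m
      have h := coord_comm B (δ (B (Sum.inl j))) (Sum.inl m) (Sum.inl l)
      rw [hanti (B (Sum.inl j)), map_neg, Finsupp.neg_apply] at h
      linear_combination - h
    · intro i j β m
      have h := hcoc (B (Sum.inl i)) (B (Sum.inl j))
      have hLHS : (B.tensorProduct B).repr (δ ⁅B (Sum.inl i), B (Sum.inl j)⁆)
          (Sum.inr β, Sum.inl m) = 0 := by
        by_contra hc
        have hmem := part3z src tgt hloop hsimple B hbz hbe hbe0 δ hdeg hanti hcoc
          ⁅B (Sum.inl i), B (Sum.inl j)⁆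
          (bracket_mem_z src tgt hloop hsimple B hbz hbe hbe0 i j)
        rw [range_inr_image B, mem_tsub_iff B] at hmem
        obtain ⟨-, hq⟩ := hmem (Sum.inr β) (Sum.inl m) hc
        obtain ⟨a, ha⟩ := hq
        exact Sum.inr_ne_inl ha
      have h2 := congrArg (fun ξ => (B.tensorProduct B).repr ξ (Sum.inr β, Sum.inl m)) h
      simp only [map_sub, Finsupp.sub_apply] at h2
      rw [hLHS] at h2
      rw [coordA src tgt hloop hsimple B hbz hbe hbe0 i (δ (B (Sum.inl j))) β m,
        coordA src tgt hloop hsimple B hbz hbe hbe0 j (δ (B (Sum.inl i))) β m,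
        sumV src tgt (fun l => (B.tensorProduct B).repr (δ (B (Sum.inl j))) (Sum.inl l, Sum.inl m)) i β,
        sumV src tgt (fun l => (B.tensorProduct B).repr (δ (B (Sum.inl i))) (Sum.inl l, Sum.inl m)) j β] at h2
      linear_combination - h2
  have hgen : ∀ j : V,
      δ (B (Sum.inl j)) ∈ tsub k N (Submodule.span k (Set.range fun i : V => B (Sum.inl i)))
              (Submodule.span k (Set.range fun a : A => B (Sum.inr a)))
          ⊔ tsub k N (Submodule.span k (Set.range fun a : A => B (Sum.inr a)))
              (Submodule.span k (Set.range fun i : V => B (Sum.inl i)))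
          ⊔ tsub k N (Submodule.span k (Set.range fun a : A => B (Sum.inr a)))
              (Submodule.span k (Set.range fun a : A => B (Sum.inr a))) := by
    intro j
    rw [← (B.tensorProduct B).sum_repr (δ (B (Sum.inl j)))]
    apply Submodule.sum_mem
    rintro ⟨(l | β), (m | b)⟩ -
    · rw [hP j l m, zero_smul]
      exact Submodule.zero_mem _
    · apply Submodule.smul_mem
      apply Submodule.mem_sup_left
      apply Submodule.mem_sup_left
      rw [Module.Basis.tensorProduct_apply]
      exact tmul_mem_tsub (Submodule.subset_span ⟨l, rfl⟩) (Submodule.subset_span ⟨b, rfl⟩)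
    · apply Submodule.smul_mem
      apply Submodule.mem_sup_left
      apply Submodule.mem_sup_right
      rw [Module.Basis.tensorProduct_apply]
      exact tmul_mem_tsub (Submodule.subset_span ⟨β, rfl⟩) (Submodule.subset_span ⟨m, rfl⟩)
    · apply Submodule.smul_mem
      apply Submodule.mem_sup_right
      rw [Module.Basis.tensorProduct_apply]
      exact tmul_mem_tsub (Submodule.subset_span ⟨β, rfl⟩) (Submodule.subset_span ⟨b, rfl⟩)
  intro w hw
  induction hw using Submodule.span_induction with
  | mem x hx => obtain ⟨j, rfl⟩ := hx; exact hgen j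
  | zero => rw [map_zero]; exact Submodule.zero_mem _
  | add x y hx hy ihx ihy => rw [map_add]; exact Submodule.add_mem _ ihx ihy
  | smul c x hx ih => rw [map_smul]; exact Submodule.smul_mem _ _ ih

end Alg


section Part2
variable {k V A : Type*} [Field k] [CharZero k]
    [Fintype V] [Fintype A] [DecidableEq V] [DecidableEq A]

theorem part2
    (src tgt : A → V)
    (hloop : ∀ a, src a ≠ tgt a)
    (hsimple : ∀ a b : A,
      (src a = src b ∧ tgt a = tgt b) ∨ (src a = tgt b ∧ tgt a = src b) → a = b)
    (hdeg : ∀ e : V, 2 ≤ deg src tgt e) :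
    (∀ T : A → ((V → k) →ₗ[k] Module.Dual k (V → k)),
        (∀ (a : A) (v w : V → k),
          T a v w = v (src a) * w (tgt a) - v (tgt a) * w (src a)) →
        ∀ S : Module.Dual k (V → k) →ₗ[k] (V → k),
        (∀ f h : Module.Dual k (V → k), f (S h) = - h (S f)) →
        (∀ a b : A, (T a).comp (S.comp (T b)) + (T b).comp (S.comp (T a)) = 0) →
        S = 0) := by
  intro T hT S hanti hTST
  set σ : V → V → k := fun n m => S (LinearMap.proj n) m with hσ
  -- antisymmetry of σ
  have hσanti : ∀ n m, σ n m = - σ m n := by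
    intro n m
    have := hanti (LinearMap.proj m) (LinearMap.proj n)
    simpa [σ] using this
  -- value of S on T b v
  have hSval : ∀ (b : A) (v : V → k) (x : V),
      S (T b v) x = v (src b) * σ (tgt b) x - v (tgt b) * σ (src b) x := by
    intro b v x
    have hfun : T b v = v (src b) • (LinearMap.proj (tgt b) : (V → k) →ₗ[k] k)
        - v (tgt b) • (LinearMap.proj (src b) : (V → k) →ₗ[k] k) := by
      apply LinearMap.ext
      intro w
      rw [hT]
      simp [mul_comm]
    rw [hfun]
    simp [σ, map_sub, map_smul, mul_comm]
  -- master scalar equation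
  have EQ : ∀ (a b : A) (v w : V → k),
      ((v (src b) * σ (tgt b) (src a) - v (tgt b) * σ (src b) (src a)) * w (tgt a)
        - (v (src b) * σ (tgt b) (tgt a) - v (tgt b) * σ (src b) (tgt a)) * w (src a))
      + ((v (src a) * σ (tgt a) (src b) - v (tgt a) * σ (src a) (src b)) * w (tgt b)
        - (v (src a) * σ (tgt a) (tgt b) - v (tgt a) * σ (src a) (tgt b)) * w (src b)) = 0 := by
    intro a b v w
    have h0 := DFunLike.congr_fun (DFunLike.congr_fun (hTST a b) v) w
    simp only [LinearMap.add_apply, LinearMap.comp_apply, LinearMap.zero_apply] at h0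
    rw [hT a (S (T b v)) w, hT b (S (T a v)) w, hSval, hSval, hSval, hSval] at h0
    linear_combination h0
  -- σ vanishes on the diagonal
  have hdiag : ∀ n, σ n n = 0 := by
    intro n
    have := hσanti n n
    linear_combination this / 2
  -- σ vanishes on (endpoints of) an edge
  have hedge : ∀ a : A, σ (tgt a) (src a) = 0 := by
    intro a
    have h := EQ a a (Pi.single (src a) 1) (Pi.single (tgt a) 1)
    have h1 : (Pi.single (src a) 1 : V → k) (src a) = 1 := by simp
    have h2 : (Pi.single (src a) 1 : V → k) (tgt a) = 0 := by
      simp [Pi.single_apply, (hloop a).symm]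
    have h3 : (Pi.single (tgt a) 1 : V → k) (tgt a) = 1 := by simp
    have h4 : (Pi.single (tgt a) 1 : V → k) (src a) = 0 := by
      simp [Pi.single_apply, hloop a]
    rw [h1, h2, h3, h4] at h
    linear_combination h / 2
  -- σ vanishes identically
  have hzero : ∀ n m, σ n m = 0 := by
    intro n m
    by_cases hnm : n = m
    · subst hnm; exact hdiag n
    by_cases hadj : ∃ a : A, (src a = n ∧ tgt a = m) ∨ (src a = m ∧ tgt a = n)
    · obtain ⟨a, ha⟩ := hadj
      rcases ha with ⟨h1, h2⟩ | ⟨h1, h2⟩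
      · rw [← h1, ← h2]
        linear_combination hσanti (src a) (tgt a) - hedge a
      · rw [← h2, ← h1]
        exact hedge a
    -- non-adjacent case
    push_neg at hadj
    obtain ⟨a, ha, hau⟩ := exists_edge_avoid hsimple (hdeg m) n
    obtain ⟨b, hb, hbq⟩ := exists_edge_avoid hsimple (hdeg n) (oth src tgt m a)
    have hum : oth src tgt m a ≠ m := oth_ne hloop ha
    have hqn : oth src tgt n b ≠ n := oth_ne hloop hb
    have hqm : oth src tgt n b ≠ m := by
      intro hh
      rcases oth_spec hb with ⟨g1, g2⟩ | ⟨g1, g2⟩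
      · exact (hadj b).1 g1 (g2.trans hh)
      · exact (hadj b).2 (g1.trans hh) g2
    have h := EQ a b (Pi.single (oth src tgt n b) 1) (Pi.single (oth src tgt m a) 1)
    rcases oth_spec ha with ⟨a1, a2⟩ | ⟨a1, a2⟩ <;> rcases oth_spec hb with ⟨b1, b2⟩ | ⟨b1, b2⟩ <;>
      rw [a1, a2, b1, b2] at h <;>
      simp only [Pi.single_apply, if_pos rfl, Ne.symm hqm, Ne.symm hqn, Ne.symm hbq,
        Ne.symm hum, Ne.symm hau, hqm, hqn, hbq, hum, hau, if_true, if_false,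
        one_mul, zero_mul, mul_zero, mul_one, sub_zero, zero_sub, add_zero, zero_add] at h <;>
      first
        | linear_combination h
        | linear_combination -h
        | linear_combination h - hσanti n m
        | linear_combination hσanti n m - h
        | linear_combination h + hσanti n m
  -- conclude S = 0
  have hSproj : ∀ n : V, S (LinearMap.proj n) = 0 := by
    intro n
    funext m
    exact hzero n m
  apply LinearMap.ext
  intro f
  have hf : f = ∑ n : V, f (Pi.single n 1) • (LinearMap.proj n : (V → k) →ₗ[k] k) := by
    apply LinearMap.ext
    intro v
    have hv : v = ∑ n : V, v n • (Pi.single n 1 : V → k) := by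
      funext x
      simp [Finset.sum_apply, Pi.single_apply, mul_comm]
    conv_lhs => rw [hv]
    rw [map_sum]
    simp [mul_comm]
  rw [hf, map_sum]
  simp [hSproj]

end Part2

/-- for the graph algebra `n = n(G) = W ⊕ z` of a finite simple graph in
which every vertex has degree at least 2: (i) `(Λ²n)^n = Λ²z`; (ii) `n` is of TST type
(the only antisymmetric `S : W* → W` with `T_α S T_β + T_β S T_α = 0` for all edges is
`S = 0`, where `W = V → k` in the vertex basis and `T_α(v)(w) = v_{src α} w_{tgt α} −
v_{tgt α} w_{src α}`); and (iii) every Lie bialgebra structure `δ` on `n` satisfies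
`δ(z) ⊆ Λ²z` and `δ(W) ⊆ W∧z ⊕ Λ²z`. -/
theorem stmt13 (k V A N : Type*) [Field k] [CharZero k]
    [Fintype V] [Fintype A] [DecidableEq V] [DecidableEq A]
    [LieRing N] [LieAlgebra k N]
    (src tgt : A → V)
    (hloop : ∀ a, src a ≠ tgt a)
    (hsimple : ∀ a b : A,
      (src a = src b ∧ tgt a = tgt b) ∨ (src a = tgt b ∧ tgt a = src b) → a = b)
    (B : Module.Basis (V ⊕ A) k N)
    (hbz : ∀ (a : A) (x : N), ⁅B (Sum.inr a), x⁆ = 0)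
    (hbe : ∀ a : A, ⁅B (Sum.inl (src a)), B (Sum.inl (tgt a))⁆ = B (Sum.inr a))
    (hbe0 : ∀ i j : V,
      (∀ a : A, ¬((src a = i ∧ tgt a = j) ∨ (src a = j ∧ tgt a = i))) →
      ⁅B (Sum.inl i), B (Sum.inl j)⁆ = 0)
    (hdeg : ∀ e : V, 2 ≤ deg src tgt e) :
    -- (i) (Λ²n)^n = Λ²z:
    (∀ ω : N ⊗[k] N, TensorProduct.comm k N N ω = -ω →
      ((∀ x : N, tAct k N x ω = 0) ↔
        ω ∈ tsub k N (Submodule.span k (Set.range fun a : A => B (Sum.inr a)))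
              (Submodule.span k (Set.range fun a : A => B (Sum.inr a)))))
    -- (ii) n is of TST type:
    ∧ (∀ T : A → ((V → k) →ₗ[k] Module.Dual k (V → k)),
        (∀ (a : A) (v w : V → k),
          T a v w = v (src a) * w (tgt a) - v (tgt a) * w (src a)) →
        ∀ S : Module.Dual k (V → k) →ₗ[k] (V → k),
        (∀ f h : Module.Dual k (V → k), f (S h) = - h (S f)) →
        (∀ a b : A, (T a).comp (S.comp (T b)) + (T b).comp (S.comp (T a)) = 0) →
        S = 0)
    -- (iii) every Lie bialgebra structure δ on n has δ(z) ⊆ Λ²z and δ(W) ⊆ W∧z ⊕ Λ²z: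
    ∧ (∀ δ : N →ₗ[k] N ⊗[k] N,
        (∀ x, TensorProduct.comm k N N (δ x) = - δ x) →
        (∀ x, (TensorProduct.map δ LinearMap.id) (δ x)
          + tCyc k N ((TensorProduct.map δ LinearMap.id) (δ x))
          + tCyc k N (tCyc k N ((TensorProduct.map δ LinearMap.id) (δ x))) = 0) →
        (∀ x y, δ ⁅x, y⁆ = tAct k N x (δ y) - tAct k N y (δ x)) →
        (∀ z ∈ Submodule.span k (Set.range fun a : A => B (Sum.inr a)),
          δ z ∈ tsub k N (Submodule.span k (Set.range fun a : A => B (Sum.inr a)))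
                  (Submodule.span k (Set.range fun a : A => B (Sum.inr a))))
        ∧ (∀ w ∈ Submodule.span k (Set.range fun i : V => B (Sum.inl i)),
            δ w ∈ tsub k N (Submodule.span k (Set.range fun i : V => B (Sum.inl i)))
                    (Submodule.span k (Set.range fun a : A => B (Sum.inr a)))
                ⊔ tsub k N (Submodule.span k (Set.range fun a : A => B (Sum.inr a)))
                    (Submodule.span k (Set.range fun i : V => B (Sum.inl i)))
                ⊔ tsub k N (Submodule.span k (Set.range fun a : A => B (Sum.inr a)))
                    (Submodule.span k (Set.range fun a : A => B (Sum.inr a))))) := by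
  refine ⟨?_, ?_, ?_⟩
  · intro ω hanti
    constructor
    · intro hinv
      exact part1full src tgt hloop hsimple B hbz hbe hbe0 hdeg ω hanti hinv
    · intro hmem x
      exact tAct_on_tsub B hbz x hmem
  · exact part2 src tgt hloop hsimple hdeg
  · intro δ hanti hcoj hcoc
    exact ⟨part3z src tgt hloop hsimple B hbz hbe hbe0 δ hdeg hanti hcoc,
      part3w src tgt hloop hsimple B hbz hbe hbe0 δ hdeg hanti hcoc⟩
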